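/- The torsion covector C^i := ∑_r C_r^{ir} is given by the formula C^i = −((m−2)/(2K))·( ∑_r a_r^{ir} − n·a^i ), where n is the dimension. -/

import Mathlib

open Finset

noncomputable section

/-- `A(p) = ∑ a^{i₁…i_m} p_{i₁}⋯p_{i_m}`, where `m = M + 3 ≥ 3`. -/
def Afun {n M : ℕ} (a : (Fin (M + 3) → Fin n) → ℝ) (p : Fin n → ℝ) : ℝ :=
  ∑ ι : Fin (M + 3) → Fin n, a ι * ∏ t, p (ι t)

/-- `K(p) = A(p)^{1/m}`. -/
def Kfun {n M : ℕ} (a : (Fin (M + 3) → Fin n) → ℝ) (p : Fin n → ℝ) : ℝ :=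
  Afun a p ^ ((1 : ℝ) / (M + 3))

/-- `a^i = (∑ a^{i i₂…i_m} p_{i₂}⋯p_{i_m}) / K^{m-1}`. -/
def aU1 {n M : ℕ} (a : (Fin (M + 3) → Fin n) → ℝ) (i : Fin n) (p : Fin n → ℝ) : ℝ :=
  (∑ ι : Fin (M + 2) → Fin n, a (Fin.cons i ι) * ∏ t, p (ι t)) / Kfun a p ^ (M + 2)

/-- `a^{ij} = (∑ a^{i j i₃…i_m} p_{i₃}⋯p_{i_m}) / K^{m-2}`. -/
def aU2 {n M : ℕ} (a : (Fin (M + 3) → Fin n) → ℝ) (i j : Fin n) (p : Fin n → ℝ) : ℝ :=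
  (∑ ι : Fin (M + 1) → Fin n, a (Fin.cons i (Fin.cons j ι)) * ∏ t, p (ι t)) / Kfun a p ^ (M + 1)

/-- `a^{ijk} = (∑ a^{i j k i₄…i_m} p_{i₄}⋯p_{i_m}) / K^{m-3}`. -/
def aU3 {n M : ℕ} (a : (Fin (M + 3) → Fin n) → ℝ) (i j k : Fin n) (p : Fin n → ℝ) : ℝ :=
  (∑ ι : Fin M → Fin n, a (Fin.cons i (Fin.cons j (Fin.cons k ι))) * ∏ t, p (ι t)) / Kfun a p ^ M

/-- Partial derivative `∂f/∂p_k` of a function of `p`. -/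
def pd {n : ℕ} (f : (Fin n → ℝ) → ℝ) (k : Fin n) (p : Fin n → ℝ) : ℝ :=
  deriv (fun t => f (Function.update p k t)) (p k)

/-- Fundamental metrical d-tensor `g^{ij} = (1/2) ∂²(K²)/∂p_i∂p_j`. -/
def gU {n M : ℕ} (a : (Fin (M + 3) → Fin n) → ℝ) (i j : Fin n) (p : Fin n → ℝ) : ℝ :=
  (1 / 2 : ℝ) * pd (fun q => pd (fun r => Kfun a r ^ 2) j q) i p

/-- Angular metrical d-tensor `h^{ij} = K ∂²K/∂p_i∂p_j`. -/
def hU {n M : ℕ} (a : (Fin (M + 3) → Fin n) → ℝ) (i j : Fin n) (p : Fin n → ℝ) : ℝ :=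
  Kfun a p * pd (fun q => pd (Kfun a) j q) i p

/-- v-torsion d-tensor `C^{ijk} = -(1/2) ∂g^{ij}/∂p_k`. -/
def CU {n M : ℕ} (a : (Fin (M + 3) → Fin n) → ℝ) (i j k : Fin n) (p : Fin n → ℝ) : ℝ :=
  -(1 / 2 : ℝ) * pd (gU a i j) k p

/-- Symmetry of `a` in all of its `m` indices. -/
def aSym {n M : ℕ} (a : (Fin (M + 3) → Fin n) → ℝ) : Prop :=
  ∀ (σ : Equiv.Perm (Fin (M + 3))) (ι : Fin (M + 3) → Fin n), a (ι ∘ σ) = a ι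

/-- `a_i = ∑_s a_{is} a^s`, where `aLow` is the inverse matrix of `(a^{ij})`. -/
def aL {n M : ℕ} (a : (Fin (M + 3) → Fin n) → ℝ) (aLow : Matrix (Fin n) (Fin n) ℝ)
    (p : Fin n → ℝ) (i : Fin n) : ℝ :=
  ∑ s, aLow i s * aU1 a s p

/-- `a_i^{jk} = ∑_s a_{is} a^{sjk}`. -/
def aL3 {n M : ℕ} (a : (Fin (M + 3) → Fin n) → ℝ) (aLow : Matrix (Fin n) (Fin n) ℝ)
    (p : Fin n → ℝ) (i j k : Fin n) : ℝ :=
  ∑ s, aLow i s * aU3 a s j k p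

/-- `g_{ij} = (1/(m-1)) a_{ij} + ((m-2)/(m-1)) a_i a_j`, the inverse of `g^{ij}`. -/
def gL {n M : ℕ} (a : (Fin (M + 3) → Fin n) → ℝ) (aLow : Matrix (Fin n) (Fin n) ℝ)
    (p : Fin n → ℝ) (i j : Fin n) : ℝ :=
  (1 / (M + 2 : ℝ)) * aLow i j + ((M + 1 : ℝ) / (M + 2)) * aL a aLow p i * aL a aLow p j

/-- v-derivation components `C_i^{jk} = ∑_s g_{is} C^{sjk}`. -/
def CL {n M : ℕ} (a : (Fin (M + 3) → Fin n) → ℝ) (aLow : Matrix (Fin n) (Fin n) ℝ)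
    (p : Fin n → ℝ) (i j k : Fin n) : ℝ :=
  ∑ s, gL a aLow p i s * CU a s j k p

/-- v-curvature d-tensor `S^{hijk} = ∑_r (C_r^{ij} C^{rhk} - C_r^{ik} C^{rhj})`. -/
def Scurv {n M : ℕ} (a : (Fin (M + 3) → Fin n) → ℝ) (aLow : Matrix (Fin n) (Fin n) ℝ)
    (p : Fin n → ℝ) (h i j k : Fin n) : ℝ :=
  ∑ r, (CL a aLow p r i j * CU a r h k p - CL a aLow p r i k * CU a r h j p)

/-- `U^{hijk} = ∑_r (a_r^{ij} a^{rhk} - a_r^{ik} a^{rhj})`. -/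
def Ufun {n M : ℕ} (a : (Fin (M + 3) → Fin n) → ℝ) (aLow : Matrix (Fin n) (Fin n) ℝ)
    (p : Fin n → ℝ) (h i j k : Fin n) : ℝ :=
  ∑ r, (aL3 a aLow p r i j * aU3 a r h k p - aL3 a aLow p r i k * aU3 a r h j p)

/-! ### Auxiliary machinery -/

def Pol {n m : ℕ} (a : (Fin m → Fin n) → ℝ) (p : Fin n → ℝ) : ℝ :=
  ∑ ι : Fin m → Fin n, a ι * ∏ t, p (ι t)

def PSym {n m : ℕ} (a : (Fin m → Fin n) → ℝ) : Prop :=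
  ∀ (σ : Equiv.Perm (Fin m)) (ι : Fin m → Fin n), a (ι ∘ σ) = a ι

def liftPerm {m : ℕ} (σ : Equiv.Perm (Fin m)) : Equiv.Perm (Fin (m + 1)) where
  toFun := Fin.cases 0 (fun i => (σ i).succ)
  invFun := Fin.cases 0 (fun i => (σ.symm i).succ)
  left_inv := by intro i; induction i using Fin.cases <;> simp
  right_inv := by intro i; induction i using Fin.cases <;> simp

lemma cons_comp_liftPerm {n m : ℕ} (σ : Equiv.Perm (Fin m)) (x : Fin n) (ι : Fin m → Fin n) :
    (Fin.cons x ι : Fin (m+1) → Fin n) ∘ (liftPerm σ) = Fin.cons x (ι ∘ σ) := by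
  funext j
  induction j using Fin.cases <;> simp [liftPerm]

lemma PSym.cons {n m : ℕ} {a : (Fin (m+1) → Fin n) → ℝ} (ha : PSym a) (x : Fin n) :
    PSym (fun ι => a (Fin.cons x ι)) := by
  intro σ ι
  simpa [cons_comp_liftPerm] using ha (liftPerm σ) (Fin.cons x ι)

lemma PSym.swap01 {n m : ℕ} {a : (Fin (m+2) → Fin n) → ℝ} (ha : PSym a)
    (x y : Fin n) (ι : Fin m → Fin n) :
    a (Fin.cons x (Fin.cons y ι)) = a (Fin.cons y (Fin.cons x ι)) := by
  have h := ha (Equiv.swap 0 1) (Fin.cons y (Fin.cons x ι))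
  rw [← h]
  congr 1
  funext j
  induction j using Fin.cases with
  | zero => simp [Equiv.swap_apply_left]
  | succ i =>
    induction i using Fin.cases with
    | zero => simp [Equiv.swap_apply_right]
    | succ i =>
      simp only [Function.comp_apply]
      rw [Equiv.swap_apply_of_ne_of_ne (by simp [Fin.ext_iff]) (by simp [Fin.ext_iff, Fin.val_succ])]
      simp

lemma Pol_cons {n m : ℕ} (a : (Fin (m+1) → Fin n) → ℝ) (p : Fin n → ℝ) :
    Pol a p = ∑ x, p x * Pol (fun ι => a (Fin.cons x ι)) p := by
  unfold Pol
  rw [← Equiv.sum_comp (Fin.consEquiv fun _ : Fin (m+1) => Fin n)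
    (fun ι => a ι * ∏ t, p (ι t)), Fintype.sum_prod_type]
  refine Finset.sum_congr rfl fun x _ => ?_
  rw [Finset.mul_sum]
  refine Finset.sum_congr rfl fun ι _ => ?_
  simp only [Fin.consEquiv, Equiv.coe_fn_mk, Fin.prod_univ_succ, Fin.cons_zero, Fin.cons_succ]
  ring

lemma insertNth_eq_cons_comp {n m : ℕ} (t₀ : Fin (m+1)) (k : Fin n) (ι : Fin m → Fin n) :
    Fin.insertNth t₀ k ι = (Fin.cons k ι : Fin (m+1) → Fin n) ∘ (Fin.cycleRange t₀) := by
  funext j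
  refine Fin.succAboveCases t₀ ?_ ?_ j
  · simp [Fin.cycleRange_self]
  · intro i; simp [Fin.cycleRange_succAbove]

lemma erase_eq_map {m : ℕ} (t₀ : Fin (m+1)) :
    (univ.erase t₀ : Finset (Fin (m+1))) = univ.map t₀.succAboveEmb := by
  rw [Fin.univ_succAbove _ t₀, Finset.erase_cons]

lemma hasDerivAt_update_coord {n : ℕ} (p : Fin n → ℝ) (k j : Fin n) (x : ℝ) :
    HasDerivAt (fun t => Function.update p k t j) (if j = k then 1 else 0) x := by
  simp only [Function.update_apply]
  by_cases h : j = k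
  · simp only [h, if_pos rfl]; exact hasDerivAt_id x
  · simp only [h, if_neg h]; exact hasDerivAt_const x _

lemma hasDerivAt_Pol {n m : ℕ} {a : (Fin (m+1) → Fin n) → ℝ} (ha : PSym a)
    (p : Fin n → ℝ) (k : Fin n) :
    HasDerivAt (fun t => Pol a (Function.update p k t))
      ((m+1) * Pol (fun ι => a (Fin.cons k ι)) p) (p k) := by
  have key : ∀ ι : Fin (m+1) → Fin n, HasDerivAt
      (fun t => a ι * ∏ t', Function.update p k t (ι t'))
      (a ι * ∑ t₀, (∏ t' ∈ univ.erase t₀, p (ι t')) *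
        (if ι t₀ = k then (1:ℝ) else 0)) (p k) := by
    intro ι
    have h := HasDerivAt.fun_finsetProd (u := (univ : Finset (Fin (m+1))))
      (f := fun t' t => Function.update p k t (ι t'))
      (f' := fun t' => if ι t' = k then (1:ℝ) else 0) (x := p k)
      (fun t' _ => hasDerivAt_update_coord p k (ι t') (p k))
    simp only [Function.update_eq_self, smul_eq_mul] at h
    exact h.const_mul (a ι)
  have total := HasDerivAt.fun_sum (fun ι (_ : ι ∈ (univ : Finset (Fin (m+1) → Fin n))) => key ι)
  have heq : (∑ ι : Fin (m+1) → Fin n, a ι * ∑ t₀, (∏ t' ∈ univ.erase t₀, p (ι t')) *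
        (if ι t₀ = k then (1:ℝ) else 0))
      = (m+1) * Pol (fun ι => a (Fin.cons k ι)) p := by
    simp only [Finset.mul_sum]
    rw [Finset.sum_comm]
    have ht : ∀ t₀ : Fin (m+1),
        (∑ ι : Fin (m+1) → Fin n, a ι * ((∏ t' ∈ univ.erase t₀, p (ι t')) *
          (if ι t₀ = k then (1:ℝ) else 0)))
        = Pol (fun ι => a (Fin.cons k ι)) p := by
      intro t₀
      rw [← Equiv.sum_comp (Fin.insertNthEquiv (fun _ : Fin (m+1) => Fin n) t₀)
        (fun ι => a ι * ((∏ t' ∈ univ.erase t₀, p (ι t')) *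
          (if ι t₀ = k then (1:ℝ) else 0))), Fintype.sum_prod_type]
      have hx : ∀ x : Fin n, (∑ ι' : Fin m → Fin n,
          a (Fin.insertNth (α := fun _ => Fin n) t₀ x ι') *
            ((∏ t' ∈ univ.erase t₀, p ((Fin.insertNth (α := fun _ => Fin n) t₀ x ι') t')) *
              (if (Fin.insertNth (α := fun _ => Fin n) t₀ x ι') t₀ = k then (1:ℝ) else 0)))
          = if x = k then Pol (fun ι => a (Fin.cons k ι)) p else 0 := by
        intro x
        simp only [Fin.insertNth_apply_same]
        by_cases hxk : x = k
        · subst hxk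
          simp only [if_pos rfl, mul_one]
          unfold Pol
          refine Finset.sum_congr rfl fun ι' _ => ?_
          rw [erase_eq_map, Finset.prod_map]
          have h1 : a (Fin.insertNth (α := fun _ => Fin n) t₀ x ι') = a (Fin.cons x ι') := by
            rw [insertNth_eq_cons_comp, ha]
          have h2 : (∏ i : Fin m, p (Fin.insertNth (α := fun _ => Fin n) t₀ x ι'
              (t₀.succAboveEmb i))) = ∏ t : Fin m, p (ι' t) := by
            refine Finset.prod_congr rfl fun i _ => ?_
            simp [Fin.succAboveEmb, Fin.insertNth_apply_succAbove]
          rw [h1, h2]; simp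
        · simp [hxk]
      rw [Finset.sum_congr rfl fun x (_ : x ∈ univ) => by
        exact hx x]
      simp
    rw [Finset.sum_congr rfl fun t₀ _ => ht t₀]
    simp [Finset.sum_const, mul_comm]
  rw [heq] at total
  unfold Pol
  exact total

lemma continuous_Pol {n m : ℕ} (b : (Fin m → Fin n) → ℝ) : Continuous (Pol b) := by
  unfold Pol
  exact continuous_finset_sum _ fun ι _ =>
    continuous_const.mul (continuous_finset_prod _ fun t _ => continuous_apply (ι t))

/-! ### The `S`-tensors (numerators) -/

def S1 {n M : ℕ} (a : (Fin (M + 3) → Fin n) → ℝ) (i : Fin n) (q : Fin n → ℝ) : ℝ :=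
  Pol (fun ι : Fin (M+2) → Fin n => a (Fin.cons i ι)) q

def S2 {n M : ℕ} (a : (Fin (M + 3) → Fin n) → ℝ) (i j : Fin n) (q : Fin n → ℝ) : ℝ :=
  Pol (fun ι : Fin (M+1) → Fin n => a (Fin.cons i (Fin.cons j ι))) q

def S3 {n M : ℕ} (a : (Fin (M + 3) → Fin n) → ℝ) (i j k : Fin n) (q : Fin n → ℝ) : ℝ :=
  Pol (fun ι : Fin M → Fin n => a (Fin.cons i (Fin.cons j (Fin.cons k ι)))) q

section Stmt7

variable {n M : ℕ} {a : (Fin (M + 3) → Fin n) → ℝ}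

lemma aU1_eq (i : Fin n) (q : Fin n → ℝ) : aU1 a i q = S1 a i q / Kfun a q ^ (M+2) := rfl
lemma aU2_eq (i j : Fin n) (q : Fin n → ℝ) : aU2 a i j q = S2 a i j q / Kfun a q ^ (M+1) := rfl
lemma aU3_eq (i j k : Fin n) (q : Fin n → ℝ) : aU3 a i j k q = S3 a i j k q / Kfun a q ^ M := rfl
lemma Afun_eq (q : Fin n → ℝ) : Afun a q = Pol a q := rfl

lemma S2_symm (hsym : aSym a) (i j : Fin n) (q : Fin n → ℝ) : S2 a i j q = S2 a j i q := by
  unfold S2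
  congr 1
  funext ι
  exact PSym.swap01 hsym i j ι

lemma S3_swap01 (hsym : aSym a) (i j k : Fin n) (q : Fin n → ℝ) :
    S3 a i j k q = S3 a j i k q := by
  unfold S3; congr 1; funext ι
  exact PSym.swap01 hsym i j (Fin.cons k ι)

lemma S3_swap12 (hsym : aSym a) (i j k : Fin n) (q : Fin n → ℝ) :
    S3 a i j k q = S3 a i k j q := by
  unfold S3; congr 1; funext ι
  exact PSym.swap01 (PSym.cons hsym i) j k ι

lemma A_contract (q : Fin n → ℝ) : Afun a q = ∑ x, q x * S1 a x q := Pol_cons a q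

lemma S1_contract (i : Fin n) (q : Fin n → ℝ) : S1 a i q = ∑ x, q x * S2 a i x q :=
  Pol_cons _ q

lemma S2_contract (i j : Fin n) (q : Fin n → ℝ) : S2 a i j q = ∑ x, q x * S3 a i j x q :=
  Pol_cons _ q

/-! ### Derivatives -/

lemma hD_A (hsym : aSym a) (q : Fin n → ℝ) (k : Fin n) :
    HasDerivAt (fun t => Afun a (Function.update q k t)) (((M:ℝ)+3) * S1 a k q) (q k) := by
  have h := hasDerivAt_Pol (m := M+2) (a := a) hsym q k
  have : ((M+2 : ℕ) + 1 : ℝ) = (M:ℝ)+3 := by push_cast; ring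
  rw [this] at h
  exact h

lemma hD_S1 (hsym : aSym a) (i : Fin n) (q : Fin n → ℝ) (k : Fin n) :
    HasDerivAt (fun t => S1 a i (Function.update q k t)) (((M:ℝ)+2) * S2 a i k q) (q k) := by
  have h := hasDerivAt_Pol (m := M+1) (a := fun ι => a (Fin.cons i ι)) (PSym.cons hsym i) q k
  have : ((M+1 : ℕ) + 1 : ℝ) = (M:ℝ)+2 := by push_cast; ring
  rw [this] at h
  exact h

lemma hD_S2 (hsym : aSym a) (i j : Fin n) (q : Fin n → ℝ) (k : Fin n) :
    HasDerivAt (fun t => S2 a i j (Function.update q k t)) (((M:ℝ)+1) * S3 a i j k q) (q k) := by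
  have h := hasDerivAt_Pol (m := M) (a := fun ι => a (Fin.cons i (Fin.cons j ι)))
    (PSym.cons (PSym.cons hsym i) j) q k
  have : ((M : ℕ) + 1 : ℝ) = (M:ℝ)+1 := by push_cast; ring
  rw [this] at h
  exact h

lemma continuous_updateF (q : Fin n → ℝ) (k : Fin n) :
    Continuous fun t : ℝ => Function.update q k t := by
  apply continuous_pi
  intro j
  simp only [Function.update_apply]
  by_cases h : j = k
  · simp only [h, if_pos rfl]; exact continuous_id
  · simp only [if_neg h]; exact continuous_const

lemma evpos (q : Fin n → ℝ) (hq : 0 < Afun a q) (k : Fin n) :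
    ∀ᶠ t in nhds (q k), 0 < Afun a (Function.update q k t) := by
  have hc : Continuous fun t => Afun a (Function.update q k t) :=
    (continuous_Pol a).comp (continuous_updateF q k)
  have hopen : IsOpen {t : ℝ | 0 < Afun a (Function.update q k t)} :=
    isOpen_lt continuous_const hc
  exact hopen.mem_nhds (by simpa [Function.update_eq_self] using hq)

/-! ### Formula for `∂(K²)/∂p_j` -/

lemma pdK2 (hsym : aSym a) {q : Fin n → ℝ} (hq : 0 < Afun a q) (j : Fin n) :
    pd (fun r => Kfun a r ^ 2) j q
      = 2 * Afun a q ^ ((2:ℝ)/(M+3) - 1) * S1 a j q := by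
  have hM3 : ((M:ℝ)+3) ≠ 0 := by positivity
  have hrpow : HasDerivAt (fun y : ℝ => y ^ ((2:ℝ)/(M+3)))
      (((2:ℝ)/(M+3)) * Afun a q ^ ((2:ℝ)/(M+3) - 1)) (Afun a q) :=
    Real.hasDerivAt_rpow_const (Or.inl hq.ne')
  have hrpow' : HasDerivAt (fun y : ℝ => y ^ ((2:ℝ)/(M+3)))
      (((2:ℝ)/(M+3)) * Afun a q ^ ((2:ℝ)/(M+3) - 1)) (Afun a (Function.update q j (q j))) := by
    rw [Function.update_eq_self]; exact hrpow
  have hcomp := hrpow'.comp (q j) (hD_A hsym q j)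
  have heq : (fun t => Kfun a (Function.update q j t) ^ 2)
      =ᶠ[nhds (q j)] fun t => Afun a (Function.update q j t) ^ ((2:ℝ)/(M+3)) := by
    filter_upwards [evpos q hq j] with t ht
    unfold Kfun
    rw [← Real.rpow_natCast (Afun a (Function.update q j t) ^ ((1:ℝ)/(M+3))) 2,
      ← Real.rpow_mul ht.le]
    congr 1
    ring
  have hder := (hcomp.congr_of_eventuallyEq heq).deriv
  unfold pd
  rw [hder]
  field_simp

/-! ### Formula for `g^{ij}` -/

lemma gU_eq (hsym : aSym a) {q : Fin n → ℝ} (hq : 0 < Afun a q) (i j : Fin n) :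
    gU a i j q = -((M:ℝ)+1) * Afun a q ^ ((2:ℝ)/(M+3) - 2) * S1 a i q * S1 a j q
      + ((M:ℝ)+2) * Afun a q ^ ((2:ℝ)/(M+3) - 1) * S2 a j i q := by
  have hM3 : ((M:ℝ)+3) ≠ 0 := by positivity
  -- derivative of t ↦ 2 * A(u t)^(c-1) * S1 j (u t) at q i
  have hrpow : HasDerivAt (fun y : ℝ => y ^ ((2:ℝ)/(M+3) - 1))
      (((2:ℝ)/(M+3) - 1) * Afun a q ^ ((2:ℝ)/(M+3) - 1 - 1)) (Afun a q) :=
    Real.hasDerivAt_rpow_const (Or.inl hq.ne')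
  have hrpow' : HasDerivAt (fun y : ℝ => y ^ ((2:ℝ)/(M+3) - 1))
      (((2:ℝ)/(M+3) - 1) * Afun a q ^ ((2:ℝ)/(M+3) - 1 - 1)) (Afun a (Function.update q i (q i))) := by
    rw [Function.update_eq_self]; exact hrpow
  have hpow := hrpow'.comp (q i) (hD_A hsym q i)
  have hS := hD_S1 hsym j q i
  have hprod := ((hpow.const_mul (2:ℝ)).mul hS)
  have heq : (fun t => pd (fun r => Kfun a r ^ 2) j (Function.update q i t))
      =ᶠ[nhds (q i)] fun t => 2 * Afun a (Function.update q i t) ^ ((2:ℝ)/(M+3) - 1)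
        * S1 a j (Function.update q i t) := by
    filter_upwards [evpos q hq i] with t ht
    exact pdK2 hsym ht j
  have hder := (hprod.congr_of_eventuallyEq heq).deriv
  have hgu : gU a i j q = (1/2 : ℝ) *
      deriv (fun t => pd (fun r => Kfun a r ^ 2) j (Function.update q i t)) (q i) := rfl
  rw [hgu, hder]
  simp only [Function.comp_apply, Function.update_eq_self]
  have he : (2:ℝ)/(M+3) - 1 - 1 = (2:ℝ)/(M+3) - 2 := by ring
  rw [he]
  have hcoef : ((2:ℝ)/(M+3) - 1) * ((M:ℝ)+3) = -((M:ℝ)+1) := by field_simp; ring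
  linear_combination (Afun a q ^ ((2:ℝ)/(M+3) - 2) * S1 a i q * S1 a j q) * hcoef

/-! ### Formula for `C^{ijk}` -/

lemma CU_eq (hsym : aSym a) {q : Fin n → ℝ} (hq : 0 < Afun a q) (i j k : Fin n) :
    CU a i j k q = -(((M:ℝ)+1) * ((M:ℝ)+2) / 2) *
      ( Afun a q ^ ((2:ℝ)/(M+3) - 1) * S3 a j i k q
        - Afun a q ^ ((2:ℝ)/(M+3) - 2) *
            (S2 a i k q * S1 a j q + S2 a j k q * S1 a i q + S2 a j i q * S1 a k q)
        + 2 * Afun a q ^ ((2:ℝ)/(M+3) - 3) * S1 a i q * S1 a j q * S1 a k q ) := by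
  have hM3 : ((M:ℝ)+3) ≠ 0 := by positivity
  have hupd : Afun a (Function.update q k (q k)) = Afun a q := by rw [Function.update_eq_self]
  have hpow2 : HasDerivAt (fun y : ℝ => y ^ ((2:ℝ)/(M+3) - 2))
      (((2:ℝ)/(M+3) - 2) * Afun a q ^ ((2:ℝ)/(M+3) - 2 - 1)) (Afun a (Function.update q k (q k))) := by
    rw [hupd]; exact Real.hasDerivAt_rpow_const (Or.inl hq.ne')
  have hpow1 : HasDerivAt (fun y : ℝ => y ^ ((2:ℝ)/(M+3) - 1))
      (((2:ℝ)/(M+3) - 1) * Afun a q ^ ((2:ℝ)/(M+3) - 1 - 1)) (Afun a (Function.update q k (q k))) := by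
    rw [hupd]; exact Real.hasDerivAt_rpow_const (Or.inl hq.ne')
  have hA2 := hpow2.comp (q k) (hD_A hsym q k)
  have hA1 := hpow1.comp (q k) (hD_A hsym q k)
  have hS1i := hD_S1 hsym i q k
  have hS1j := hD_S1 hsym j q k
  have hS2ji := hD_S2 hsym j i q k
  have term1 := (((hA2.const_mul (-((M:ℝ)+1))).mul hS1i).mul hS1j)
  have term2 := ((hA1.const_mul (((M:ℝ)+2))).mul hS2ji)
  have total := term1.add term2
  simp only [Function.comp_apply, Function.update_eq_self, Pi.mul_apply] at total
  have heq : (fun t => gU a i j (Function.update q k t)) =ᶠ[nhds (q k)]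
      (fun t => -((M:ℝ)+1) * Afun a (Function.update q k t) ^ ((2:ℝ)/(M+3) - 2)
          * S1 a i (Function.update q k t) * S1 a j (Function.update q k t)
        + ((M:ℝ)+2) * Afun a (Function.update q k t) ^ ((2:ℝ)/(M+3) - 1)
          * S2 a j i (Function.update q k t)) := by
    filter_upwards [evpos q hq k] with t ht
    exact gU_eq hsym ht i j
  have hder := (total.congr_of_eventuallyEq heq).deriv
  have hcu : CU a i j k q = -(1/2 : ℝ) *
      deriv (fun t => gU a i j (Function.update q k t)) (q k) := rfl
  rw [hcu, hder]
  have he2 : (2:ℝ)/(M+3) - 2 - 1 = (2:ℝ)/(M+3) - 3 := by ring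
  have he1 : (2:ℝ)/(M+3) - 1 - 1 = (2:ℝ)/(M+3) - 2 := by ring
  rw [he2, he1]
  have hc2 : ((2:ℝ)/(M+3) - 2) * ((M:ℝ)+3) = -(2*(M:ℝ)+4) := by field_simp; ring
  have hc1 : ((2:ℝ)/(M+3) - 1) * ((M:ℝ)+3) = -((M:ℝ)+1) := by field_simp; ring
  linear_combination
    ((((M:ℝ)+1)/2) * Afun a q ^ ((2:ℝ)/(M+3) - 3) * S1 a k q * S1 a i q * S1 a j q) * hc2
    + ((-(((M:ℝ)+2))/2) * Afun a q ^ ((2:ℝ)/(M+3) - 2) * S1 a k q * S2 a j i q) * hc1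

/-! ### Conversion to the normalized tensors -/

lemma Kpos {q : Fin n → ℝ} (hq : 0 < Afun a q) : 0 < Kfun a q :=
  Real.rpow_pos_of_pos hq _

lemma A_rpow_int {q : Fin n → ℝ} (hq : 0 < Afun a q) (z : ℤ) :
    Afun a q ^ ((z:ℝ)/(M+3)) = Kfun a q ^ z := by
  have h : ((z:ℝ))/(M+3) = (1:ℝ)/(M+3) * (z:ℝ) := by ring
  rw [h, Real.rpow_mul hq.le]
  exact Real.rpow_intCast _ z

lemma A_eq_Kpow {q : Fin n → ℝ} (hq : 0 < Afun a q) : Afun a q = Kfun a q ^ (M+3 : ℕ) := by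
  have h := A_rpow_int hq (M+3 : ℤ)
  have h1 : (((M+3:ℤ)):ℝ)/((M:ℝ)+3) = 1 := by
    rw [div_eq_one_iff_eq (by positivity)]; push_cast; ring
  rw [h1, Real.rpow_one] at h
  rw [h, show ((M+3 : ℤ)) = ((M+3 : ℕ) : ℤ) by push_cast; ring, zpow_natCast]

lemma hP1 {q : Fin n → ℝ} (hq : 0 < Afun a q) :
    Afun a q ^ ((2:ℝ)/(M+3) - 1) = (Kfun a q ^ (M+1 : ℕ))⁻¹ := by
  have he : (2:ℝ)/(M+3) - 1 = ((-(M+1:ℤ) : ℤ):ℝ)/((M:ℝ)+3) := by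
    have : ((M:ℝ)+3) ≠ 0 := by positivity
    field_simp
    push_cast
    ring
  rw [he, A_rpow_int hq, zpow_neg]
  norm_cast

lemma hP2 {q : Fin n → ℝ} (hq : 0 < Afun a q) :
    Afun a q ^ ((2:ℝ)/(M+3) - 2) = (Kfun a q ^ (2*M+4 : ℕ))⁻¹ := by
  have he : (2:ℝ)/(M+3) - 2 = ((-(2*M+4:ℤ) : ℤ):ℝ)/((M:ℝ)+3) := by
    have : ((M:ℝ)+3) ≠ 0 := by positivity
    field_simp
    push_cast
    ring
  rw [he, A_rpow_int hq, zpow_neg]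
  norm_cast

lemma hP3 {q : Fin n → ℝ} (hq : 0 < Afun a q) :
    Afun a q ^ ((2:ℝ)/(M+3) - 3) = (Kfun a q ^ (3*M+7 : ℕ))⁻¹ := by
  have he : (2:ℝ)/(M+3) - 3 = ((-(3*M+7:ℤ) : ℤ):ℝ)/((M:ℝ)+3) := by
    have : ((M:ℝ)+3) ≠ 0 := by positivity
    field_simp
    push_cast
    ring
  rw [he, A_rpow_int hq, zpow_neg]
  norm_cast

lemma CU_aU (hsym : aSym a) {q : Fin n → ℝ} (hq : 0 < Afun a q) (i j k : Fin n) :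
    CU a i j k q = -(((M:ℝ)+1) * ((M:ℝ)+2) / (2 * Kfun a q)) *
      ( aU3 a i j k q - aU2 a i j q * aU1 a k q - aU2 a i k q * aU1 a j q
        - aU2 a j k q * aU1 a i q
        + 2 * aU1 a i q * aU1 a j q * aU1 a k q ) := by
  have hK := Kpos (a := a) hq
  rw [CU_eq hsym hq i j k, hP1 hq, hP2 hq, hP3 hq, S3_swap01 hsym j i k, S2_symm hsym j i]
  simp only [aU1_eq, aU2_eq, aU3_eq]
  have h1 : Kfun a q ^ (2*M+4 : ℕ) = Kfun a q ^ (M+1) * (Kfun a q ^ (M+2) * Kfun a q) := by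
    rw [← pow_succ, ← pow_add]; congr 1; ring
  have h2 : Kfun a q ^ (3*M+7 : ℕ)
      = Kfun a q ^ (M+2) * Kfun a q ^ (M+2) * (Kfun a q ^ (M+2) * Kfun a q) := by
    rw [← pow_succ, ← pow_add, ← pow_add]; congr 1; ring
  have h3 : Kfun a q ^ (M+1 : ℕ) * Kfun a q = Kfun a q ^ (M+2) := by
    rw [← pow_succ]
  field_simp
  rw [h1, h2]
  ring

/-! ### Contraction identities -/

lemma sum_p_aU1 {q : Fin n → ℝ} (hq : 0 < Afun a q) :
    ∑ r, q r * aU1 a r q = Kfun a q := by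
  have hK := (Kpos (a := a) hq).ne'
  simp only [aU1_eq]
  have h : ∀ r, q r * (S1 a r q / Kfun a q ^ (M+2)) = q r * S1 a r q / Kfun a q ^ (M+2) :=
    fun r => by ring
  rw [Finset.sum_congr rfl fun r _ => h r, ← Finset.sum_div, ← A_contract, A_eq_Kpow hq,
    pow_succ]
  field_simp

lemma sum_aU2_p {q : Fin n → ℝ} (hq : 0 < Afun a q) (i : Fin n) :
    ∑ j, aU2 a i j q * q j = Kfun a q * aU1 a i q := by
  have hK := (Kpos (a := a) hq).ne'
  simp only [aU1_eq, aU2_eq]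
  have h : ∀ j, S2 a i j q / Kfun a q ^ (M+1) * q j = q j * S2 a i j q / Kfun a q ^ (M+1) :=
    fun j => by ring
  rw [Finset.sum_congr rfl fun j _ => h j, ← Finset.sum_div, ← S1_contract]
  rw [show (M+2 : ℕ) = (M+1)+1 from rfl, pow_succ]
  field_simp
  ring

lemma sum_p_aU2 (hsym : aSym a) {q : Fin n → ℝ} (hq : 0 < Afun a q) (i : Fin n) :
    ∑ s, q s * aU2 a s i q = Kfun a q * aU1 a i q := by
  have h : ∀ s, aU2 a s i q = aU2 a i s q := fun s => by
    simp only [aU2_eq]; rw [S2_symm hsym s i]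
  calc ∑ s, q s * aU2 a s i q = ∑ s, aU2 a i s q * q s := by
        refine Finset.sum_congr rfl fun s _ => ?_; rw [h s]; ring
    _ = Kfun a q * aU1 a i q := sum_aU2_p hq i

lemma sum_aU3_p {q : Fin n → ℝ} (hq : 0 < Afun a q) (i j : Fin n) :
    ∑ k, aU3 a i j k q * q k = Kfun a q * aU2 a i j q := by
  have hK := (Kpos (a := a) hq).ne'
  simp only [aU2_eq, aU3_eq]
  have h : ∀ k, S3 a i j k q / Kfun a q ^ M * q k = q k * S3 a i j k q / Kfun a q ^ M :=
    fun k => by ring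
  rw [Finset.sum_congr rfl fun k _ => h k, ← Finset.sum_div, ← S2_contract, pow_succ]
  field_simp

lemma sum_p_aU3 (hsym : aSym a) {q : Fin n → ℝ} (hq : 0 < Afun a q) (i r : Fin n) :
    ∑ s, q s * aU3 a s i r q = Kfun a q * aU2 a i r q := by
  have h : ∀ s, aU3 a s i r q = aU3 a i r s q := fun s => by
    simp only [aU3_eq]
    rw [S3_swap01 hsym s i r, S3_swap12 hsym i s r]
  calc ∑ s, q s * aU3 a s i r q = ∑ s, aU3 a i r s q * q s := by
        refine Finset.sum_congr rfl fun s _ => ?_; rw [h s]; ring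
    _ = Kfun a q * aU2 a i r q := sum_aU3_p hq i r

end Stmt7

/-- the torsion covector `C^i = ∑_r C_r^{ir}` satisfies
`C^i = -((m-2)/(2K)) (∑_r a_r^{ir} - n a^i)`, where `m = M + 3` and `n = dim M`. -/
theorem stmt_7 {n M : ℕ} (hn : 4 ≤ n) (a : (Fin (M + 3) → Fin n) → ℝ)
    (hsym : aSym a) (p : Fin n → ℝ) (hA : 0 < Afun a p)
    (aLow : Matrix (Fin n) (Fin n) ℝ)
    (hInv₁ : (Matrix.of fun i j => aU2 a i j p) * aLow = 1)
    (hInv₂ : aLow * (Matrix.of fun i j => aU2 a i j p) = 1) :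
    ∀ i : Fin n,
      ∑ r, CL a aLow p r i r =
        -((M + 1 : ℝ) / (2 * Kfun a p)) *
          ((∑ r, aL3 a aLow p r i r) - (n : ℝ) * aU1 a i p) := by
  intro i
  have hK : 0 < Kfun a p := Kpos hA
  set K := Kfun a p with hKdef
  have hKne : K ≠ 0 := hK.ne'
  have hM2 : ((M:ℝ)+2) ≠ 0 := by positivity
  have inv2 : ∀ r j, ∑ s, aLow r s * aU2 a s j p = if r = j then 1 else 0 := by
    intro r j
    have h := congrFun (congrFun hInv₂ r) j
    simpa [Matrix.mul_apply, Matrix.one_apply] using h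
  have haL : ∀ r, aL a aLow p r = p r / K := by
    intro r
    have e : ∀ s, aU1 a s p = (∑ j, aU2 a s j p * p j) / K := fun s => by
      rw [sum_aU2_p hA s]; field_simp; rfl
    unfold aL
    calc ∑ s, aLow r s * aU1 a s p
        = ∑ s, ∑ j, aLow r s * aU2 a s j p * p j / K := by
          refine Finset.sum_congr rfl fun s _ => ?_
          rw [e s, Finset.sum_div, Finset.mul_sum]
          refine Finset.sum_congr rfl fun j _ => by ring
      _ = ∑ j, (∑ s, aLow r s * aU2 a s j p) * p j / K := by
          rw [Finset.sum_comm]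
          refine Finset.sum_congr rfl fun j _ => ?_
          rw [Finset.sum_mul, Finset.sum_div]
      _ = p r / K := by
          rw [Finset.sum_congr rfl fun j (_ : j ∈ univ) => by rw [inv2 r j]]
          simp [ite_mul, apply_ite (· / K), Finset.sum_ite_eq]
  have hCUf : ∀ s r, CU a s i r p = -(((M:ℝ)+1) * ((M:ℝ)+2) / (2 * K)) * (aU3 a s i r p - aU2 a s i p * aU1 a r p - aU2 a s r p * aU1 a i p - aU2 a i r p * aU1 a s p + 2 * aU1 a s p * aU1 a i p * aU1 a r p) :=
    fun s r => CU_aU hsym hA s i r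
  have hinner : ∀ r, (∑ s, p s * (aU3 a s i r p - aU2 a s i p * aU1 a r p - aU2 a s r p * aU1 a i p - aU2 a i r p * aU1 a s p + 2 * aU1 a s p * aU1 a i p * aU1 a r p)) = 0 := by
    intro r
    have h : ∀ s, p s * (aU3 a s i r p - aU2 a s i p * aU1 a r p - aU2 a s r p * aU1 a i p - aU2 a i r p * aU1 a s p + 2 * aU1 a s p * aU1 a i p * aU1 a r p)
        = p s * aU3 a s i r p - (p s * aU2 a s i p) * aU1 a r p
          - (p s * aU2 a s r p) * aU1 a i p - (p s * aU1 a s p) * aU2 a i r p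
          + (p s * aU1 a s p) * (2 * aU1 a i p * aU1 a r p) := fun s => by ring
    rw [Finset.sum_congr rfl fun s _ => h s, Finset.sum_add_distrib,
      Finset.sum_sub_distrib, Finset.sum_sub_distrib, Finset.sum_sub_distrib,
      ← Finset.sum_mul, ← Finset.sum_mul, ← Finset.sum_mul, ← Finset.sum_mul,
      sum_p_aU3 hsym hA i r, sum_p_aU2 hsym hA i, sum_p_aU2 hsym hA r, sum_p_aU1 hA]
    ring
  have hAinner : ∀ r, (∑ s, aLow r s * (aU3 a s i r p - aU2 a s i p * aU1 a r p - aU2 a s r p * aU1 a i p - aU2 a i r p * aU1 a s p + 2 * aU1 a s p * aU1 a i p * aU1 a r p))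
      = aL3 a aLow p r i r - (if r = i then (1:ℝ) else 0) * aU1 a r p - aU1 a i p
        - (p r / K) * aU2 a i r p + (p r / K) * (2 * aU1 a i p * aU1 a r p) := by
    intro r
    have h : ∀ s, aLow r s * (aU3 a s i r p - aU2 a s i p * aU1 a r p - aU2 a s r p * aU1 a i p - aU2 a i r p * aU1 a s p + 2 * aU1 a s p * aU1 a i p * aU1 a r p)
        = aLow r s * aU3 a s i r p - (aLow r s * aU2 a s i p) * aU1 a r p
          - (aLow r s * aU2 a s r p) * aU1 a i p - (aLow r s * aU1 a s p) * aU2 a i r p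
          + (aLow r s * aU1 a s p) * (2 * aU1 a i p * aU1 a r p) := fun s => by ring
    have haLr : (∑ s, aLow r s * aU1 a s p) = p r / K := haL r
    rw [Finset.sum_congr rfl fun s _ => h s, Finset.sum_add_distrib,
      Finset.sum_sub_distrib, Finset.sum_sub_distrib, Finset.sum_sub_distrib,
      ← Finset.sum_mul, ← Finset.sum_mul, ← Finset.sum_mul, ← Finset.sum_mul,
      inv2 r i, inv2 r r, haLr]
    have : (∑ s, aLow r s * aU3 a s i r p) = aL3 a aLow p r i r := rfl
    rw [this]
    simp
  have hCL : ∀ r, CL a aLow p r i r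
      = -(((M:ℝ)+1)/(2*K)) * (∑ s, aLow r s * (aU3 a s i r p - aU2 a s i p * aU1 a r p - aU2 a s r p * aU1 a i p - aU2 a i r p * aU1 a s p + 2 * aU1 a s p * aU1 a i p * aU1 a r p)) := by
    intro r
    unfold CL gL
    have h : ∀ s, ((1 / ((M:ℝ) + 2)) * aLow r s
          + (((M:ℝ) + 1) / ((M:ℝ) + 2)) * aL a aLow p r * aL a aLow p s) * CU a s i r p
        = -(((M:ℝ)+1)/(2*K)) * (aLow r s * (aU3 a s i r p - aU2 a s i p * aU1 a r p - aU2 a s r p * aU1 a i p - aU2 a i r p * aU1 a s p + 2 * aU1 a s p * aU1 a i p * aU1 a r p))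
          + (-((((M:ℝ)+1)*((M:ℝ)+1))/(2*K*K*K)) * p r) * (p s * (aU3 a s i r p - aU2 a s i p * aU1 a r p - aU2 a s r p * aU1 a i p - aU2 a i r p * aU1 a s p + 2 * aU1 a s p * aU1 a i p * aU1 a r p)) := by
      intro s
      rw [hCUf s r, haL r, haL s]
      field_simp
      ring
    rw [Finset.sum_congr rfl fun s _ => h s, Finset.sum_add_distrib,
      ← Finset.mul_sum, ← Finset.mul_sum, hinner r]
    ring
  rw [Finset.sum_congr rfl fun r (_ : r ∈ univ) => hCL r, ← Finset.mul_sum,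
    Finset.sum_congr rfl fun r (_ : r ∈ univ) => hAinner r, Finset.sum_add_distrib,
    Finset.sum_sub_distrib, Finset.sum_sub_distrib, Finset.sum_sub_distrib]
  have hp1 : (∑ r, (if r = i then (1:ℝ) else 0) * aU1 a r p) = aU1 a i p := by
    simp [ite_mul, Finset.sum_ite_eq']
  have hp2 : (∑ _r : Fin n, aU1 a i p) = n * aU1 a i p := by
    simp [Finset.sum_const, Finset.card_univ]
  have hp3 : (∑ r, (p r / K) * aU2 a i r p) = aU1 a i p := by
    have h : ∀ r, (p r / K) * aU2 a i r p = (aU2 a i r p * p r) / K := fun r => by ring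
    rw [Finset.sum_congr rfl fun r _ => h r, ← Finset.sum_div, sum_aU2_p hA i]
    field_simp
    exact mul_comm _ _
  have hp4 : (∑ r, (p r / K) * (2 * aU1 a i p * aU1 a r p)) = 2 * aU1 a i p := by
    have h : ∀ r, (p r / K) * (2 * aU1 a i p * aU1 a r p)
        = (p r * aU1 a r p) * (2 * aU1 a i p / K) := fun r => by ring
    rw [Finset.sum_congr rfl fun r _ => h r, ← Finset.sum_mul, sum_p_aU1 hA]
    field_simp
    exact mul_comm _ _
  rw [hp1, hp2, hp3, hp4]
  ring
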